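/- Let K be a field and let θ be a ring automorphism of K with θ(θ(x)) = x for all x and θ ≠ id. Then for every nonzero u ∈ K there exist nonzero u₁, u₂ ∈ K and elements t₁, t₂ ∈ K such that t₁·θ(t₁) = u₁ + θ(u₁), t₂·θ(t₂) = u₂ + θ(u₂), and u = u₁·u₂. (In the paper's notation: if R is a field then every unit lies in ℛ₂, i.e. is a product of two elements of ℛ₁ = {u ∈ K* | ∃ t, (t,u) ∈ 𝒜(K)*}.) -/
import Mathlib


/-- If `K` is a field with a nontrivial involutive ring automorphism `θ`, then every nonzero
element of `K` is a product of two nonzero elements `u₁, u₂` each admitting `tᵢ` with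
`tᵢ·θ(tᵢ) = uᵢ + θ(uᵢ)` (i.e. every unit lies in `ℛ₂`). -/
theorem stmt_15 {K : Type*} [Field K] (θ : K ≃+* K) (hθ : ∀ x, θ (θ x) = x)
    (hne : θ ≠ RingEquiv.refl K) (u : K) (hu : u ≠ 0) :
    ∃ u₁ u₂ t₁ t₂ : K, u₁ ≠ 0 ∧ u₂ ≠ 0 ∧
      t₁ * θ t₁ = u₁ + θ u₁ ∧ t₂ * θ t₂ = u₂ + θ u₂ ∧ u = u₁ * u₂ := by
  obtain ⟨w, hw⟩ : ∃ w : K, θ w ≠ w := by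
    by_contra h
    push_neg at h
    exact hne (RingEquiv.ext fun x => h x)
  set d := w - θ w with hd
  have hd0 : d ≠ 0 := sub_ne_zero.mpr fun h => hw h.symm
  have hθd : θ d = -d := by
    rw [hd, map_sub, hθ]; ring
  set e := (u - θ u) / d with he
  have hθe : θ e = e := by
    rw [he, map_div₀, map_sub, hθ, hθd, div_neg, ← neg_div, neg_sub]
  by_cases h0 : e = 0
  · have huθ : θ u = u := by
      have h1 : u - θ u = 0 := by
        have := (div_eq_zero_iff.mp (he ▸ h0)).resolve_right hd0
        exact this
      exact (sub_eq_zero.mp h1).symm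
    refine ⟨d, u / d, 0, 0, hd0, div_ne_zero hu hd0, ?_, ?_, ?_⟩
    · rw [hθd]; ring
    · rw [map_div₀, huθ, hθd, div_neg]; ring
    · field_simp
  · have hed : e * d ≠ 0 := mul_ne_zero h0 hd0
    refine ⟨e * d, u / (e * d), 0, 1, hed, div_ne_zero hu hed, ?_, ?_, ?_⟩
    · rw [map_mul, hθe, hθd]; ring
    · have hue : u - θ u = e * d := by
        rw [he]; field_simp
      rw [map_div₀, map_mul, hθe, hθd, map_one, mul_neg, div_neg]
      rw [← sub_eq_add_neg, div_sub_div_same, hue, div_self hed, one_mul]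
    · field_simp
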